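/- arXiv:1510.03472 — 6 statements merged into one kernel-verified Lean document; each statement's English description precedes it below -/
import Mathlib

section
/- Let M be a von Neumann algebra acting on a complex Hilbert space H and let a ∈ M be a positive injective bounded operator. Then the set {√a x √a : x ∈ M} is dense in M for the weak operator topology, i.e. every y ∈ M lies in the WOT-closure of {√a x √a : x ∈ M}; moreover, every selfadjoint y ∈ M lies in the WOT-closure of {√a x √a : x ∈ M, x selfadjoint}. -/
set_option synthInstance.maxHeartbeats 1000000
set_option maxHeartbeats 1000000
open Filter Topology

section Aux

variable {H : Type*} [NormedAddCommGroup H] [InnerProductSpace ℂ H] [CompleteSpace H]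

local notation "⟪" x ", " y "⟫" => @inner ℂ _ _ x y

lemma isClosed_centralizer' (S : Set (H →L[ℂ] H)) : IsClosed (Set.centralizer S) := by
  have : Set.centralizer S = ⋂ g ∈ S, {z : H →L[ℂ] H | g * z = z * g} := by
    ext z; simp [Set.mem_centralizer_iff]
  rw [this]
  exact isClosed_biInter fun g _ =>
    isClosed_eq (continuous_const.mul continuous_id) (continuous_id.mul continuous_const)

lemma vna_isClosed (M : VonNeumannAlgebra H) : IsClosed (M : Set (H →L[ℂ] H)) := by
  rw [← M.centralizer_centralizer]
  exact isClosed_centralizer' _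

lemma cfc_mem_vna (M : VonNeumannAlgebra H) {a : H →L[ℂ] H} (haM : a ∈ M)
    (ha : IsSelfAdjoint a) (f : ℝ → ℝ) (hf : ContinuousOn f (spectrum ℝ a)) :
    cfc f a ∈ M := by
  rw [cfc_apply f a ha hf]
  suffices h : ∀ g : C(spectrum ℝ a, ℝ), cfcHom (R := ℝ) ha g ∈ M from h _
  intro g
  have hdense := polynomialFunctions.topologicalClosure (spectrum ℝ a)
  have hg : g ∈ closure ((polynomialFunctions (spectrum ℝ a) : Set C(spectrum ℝ a, ℝ))) := by
    rw [← Subalgebra.topologicalClosure_coe, hdense]; trivial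
  have hmaps : Set.MapsTo (cfcHom (R := ℝ) ha)
      ((polynomialFunctions (spectrum ℝ a) : Set C(spectrum ℝ a, ℝ))) (M : Set (H →L[ℂ] H)) := by
    intro p hp
    rw [SetLike.mem_coe, polynomialFunctions.eq_adjoin_X] at hp
    induction hp using Algebra.adjoin_induction with
    | mem x hx =>
      simp only [Set.mem_singleton_iff] at hx
      subst hx
      rw [Polynomial.toContinuousMapOnAlgHom_apply, Polynomial.toContinuousMapOn_X_eq_restrict_id,
        cfcHom_id ha]
      exact haM
    | algebraMap r =>
      rw [AlgHomClass.commutes]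
      have : algebraMap ℝ (H →L[ℂ] H) r = algebraMap ℂ (H →L[ℂ] H) ((r : ℂ)) := by
        rw [IsScalarTower.algebraMap_apply ℝ ℂ (H →L[ℂ] H)]
        norm_num
      rw [this]
      exact M.toStarSubalgebra.algebraMap_mem _
    | add x y _ _ hx hy => rw [map_add]; exact add_mem hx hy
    | mul x y _ _ hx hy => rw [map_mul]; exact mul_mem hx hy
  have hcont : Continuous (cfcHom (R := ℝ) ha) := (cfcHom_isClosedEmbedding (R := ℝ) ha).continuous
  have := (hmaps.closure hcont) hg
  rwa [(vna_isClosed M).closure_eq] at this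

lemma dense_range_of_sa_inj {b : H →L[ℂ] H} (hb : IsSelfAdjoint b)
    (hinj : Function.Injective b) : DenseRange b := by
  have h1 : (LinearMap.range (b : H →ₗ[ℂ] H)).topologicalClosure = ⊤ := by
    rw [Submodule.topologicalClosure_eq_top_iff, Submodule.eq_bot_iff]
    intro v hv
    have h2 : ⟪b (b v), v⟫ = 0 := hv _ ⟨b v, rfl⟩
    have h3 : ⟪b v, b v⟫ = 0 := (hb.isSymmetric (b v) v).symm.trans h2
    have h4 : b v = 0 := by rwa [inner_self_eq_zero] at h3
    exact hinj (h4.trans (map_zero b).symm)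
  have : Dense ((LinearMap.range (b : H →ₗ[ℂ] H) : Submodule ℂ H) : Set H) := by
    rw [Submodule.dense_iff_topologicalClosure_eq_top]; exact h1
  simpa [LinearMap.coe_range, DenseRange] using this

end Aux

/-- Let `M` be a von Neumann algebra acting on a complex Hilbert space `H`
and let `a ∈ M` be a positive injective bounded operator.  Then `{√a x √a : x ∈ M}` is
WOT-dense in `M`, and `{√a x √a : x ∈ M selfadjoint}` is WOT-dense in the selfadjoint
part of `M`. -/
theorem stmt0 (H : Type*) [NormedAddCommGroup H] [InnerProductSpace ℂ H] [CompleteSpace H]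
    (M : VonNeumannAlgebra H) (a : H →L[ℂ] H) (haM : a ∈ M) (ha_pos : 0 ≤ a)
    (ha_inj : Function.Injective a) :
    (∀ y : H →L[ℂ] H, y ∈ M →
      (ContinuousLinearMapWOT.ofCLM : (H →L[ℂ] H) → (H →WOT[ℂ] H)) y ∈
        closure ((ContinuousLinearMapWOT.ofCLM : (H →L[ℂ] H) → (H →WOT[ℂ] H)) ''
          {z : H →L[ℂ] H | ∃ x ∈ M, z = CFC.sqrt a * x * CFC.sqrt a})) ∧
    (∀ y : H →L[ℂ] H, y ∈ M → IsSelfAdjoint y →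
      (ContinuousLinearMapWOT.ofCLM : (H →L[ℂ] H) → (H →WOT[ℂ] H)) y ∈
        closure ((ContinuousLinearMapWOT.ofCLM : (H →L[ℂ] H) → (H →WOT[ℂ] H)) ''
          {z : H →L[ℂ] H | ∃ x ∈ M, IsSelfAdjoint x ∧ z = CFC.sqrt a * x * CFC.sqrt a})) := by
  have ha_sa : IsSelfAdjoint a := IsSelfAdjoint.of_nonneg ha_pos
  have hspec : ∀ t ∈ spectrum ℝ a, (0:ℝ) ≤ t := fun t ht => spectrum_nonneg_of_nonneg ha_pos ht
  -- the functions
  set k : ℕ → ℝ → ℝ := fun n t => (max (Real.sqrt t) (1/(n+1)))⁻¹ with hk_def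
  set f : ℕ → ℝ → ℝ := fun n t => Real.sqrt t * k n t with hf_def
  have hmax_pos : ∀ (n : ℕ) (t : ℝ), (0:ℝ) < max (Real.sqrt t) (1/(n+1)) := fun n t =>
    lt_of_lt_of_le (by positivity) (le_max_right _ _)
  have hk_cont : ∀ n, Continuous (k n) := fun n =>
    ((Real.continuous_sqrt).max continuous_const).inv₀ fun t => (hmax_pos n t).ne'
  have hf_cont : ∀ n, Continuous (f n) := fun n => Real.continuous_sqrt.mul (hk_cont n)
  -- sqrt a as a real cfc
  have hb_eq : CFC.sqrt a = cfc Real.sqrt a := by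
    refine CFC.sqrt_unique ?_ (cfc_nonneg fun x _ => Real.sqrt_nonneg x)
    rw [← cfc_mul _ _ a Real.continuous_sqrt.continuousOn Real.continuous_sqrt.continuousOn]
    have : cfc (fun t => Real.sqrt t * Real.sqrt t) a = cfc (id : ℝ → ℝ) a :=
      cfc_congr fun t ht => Real.mul_self_sqrt (hspec t ht)
    rw [this, cfc_id ℝ a]
  have hbb : CFC.sqrt a * CFC.sqrt a = a := CFC.sqrt_mul_sqrt_self a ha_pos
  have hb_sa : IsSelfAdjoint (CFC.sqrt a) := IsSelfAdjoint.of_nonneg (CFC.sqrt_nonneg a)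
  have hbM : CFC.sqrt a ∈ M := by
    rw [hb_eq]; exact cfc_mem_vna M haM ha_sa _ Real.continuous_sqrt.continuousOn
  have hb_inj : Function.Injective ⇑(CFC.sqrt a) := by
    intro v w h
    apply ha_inj
    show a v = a w
    rw [← hbb]
    simp only [ContinuousLinearMap.mul_apply]
    rw [h]
  -- operators
  set c : ℕ → (H →L[ℂ] H) := fun n => cfc (k n) a with hc_def
  set g : ℕ → (H →L[ℂ] H) := fun n => cfc (f n) a with hg_def
  have hcM : ∀ n, c n ∈ M := fun n => cfc_mem_vna M haM ha_sa _ (hk_cont n).continuousOn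
  have hc_sa : ∀ n, IsSelfAdjoint (c n) := fun n => cfc_predicate (R := ℝ) (k n) a
  have hbc : ∀ n, CFC.sqrt a * c n = g n := fun n => by
    rw [hb_eq, hc_def, hg_def, ← cfc_mul _ _ a Real.continuous_sqrt.continuousOn
      (hk_cont n).continuousOn]
  have hcb : ∀ n, c n * CFC.sqrt a = g n := fun n => by
    rw [hb_eq, hc_def, hg_def, ← cfc_mul _ _ a (hk_cont n).continuousOn
      Real.continuous_sqrt.continuousOn]
    exact cfc_congr fun t _ => mul_comm _ _
  -- pointwise bounds on f n over the spectrum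
  have hf_bound : ∀ (n : ℕ) (t : ℝ), 0 ≤ f n t ∧ f n t ≤ 1 := by
    intro n t
    have h1 : 0 < max (Real.sqrt t) (1/(n+1)) := hmax_pos n t
    constructor
    · exact mul_nonneg (Real.sqrt_nonneg t) (le_of_lt (inv_pos.mpr h1))
    · have hrfl : f n t = Real.sqrt t * (max (Real.sqrt t) (1/(n+1)))⁻¹ := rfl
      rw [hrfl, ← div_eq_mul_inv, div_le_one h1]
      exact le_max_left _ _
  -- 1 - g n as a cfc
  have he1 : ∀ n, (1 : H →L[ℂ] H) - g n = cfc (fun t => 1 - f n t) a := by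
    intro n
    rw [cfc_sub _ _ a (continuous_const.continuousOn) (hf_cont n).continuousOn, cfc_const_one ℝ a]
  have h_norm1 : ∀ n, ‖(1 : H →L[ℂ] H) - g n‖ ≤ 1 := by
    intro n
    rw [he1 n]
    refine norm_cfc_le zero_le_one fun t ht => ?_
    have := hf_bound n t
    rw [Real.norm_eq_abs, abs_le]
    constructor <;> linarith [this.1, this.2]
  have h_norm2 : ∀ n, ‖((1 : H →L[ℂ] H) - g n) * CFC.sqrt a‖ ≤ 1/(n+1) := by
    intro n
    rw [he1 n, hb_eq, ← cfc_mul (fun t => 1 - f n t) Real.sqrt a (continuous_const.sub (hf_cont n)).continuousOn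
      Real.continuous_sqrt.continuousOn]
    refine norm_cfc_le (by positivity) fun t ht => ?_
    have hs : 0 ≤ Real.sqrt t := Real.sqrt_nonneg t
    rcases le_or_gt (Real.sqrt t) (1/(n+1)) with hle | hlt
    · have hf1 := hf_bound n t
      rw [Real.norm_eq_abs, abs_of_nonneg (mul_nonneg (by linarith [hf1.2]) hs)]
      calc (1 - f n t) * Real.sqrt t ≤ 1 * Real.sqrt t := by
            apply mul_le_mul_of_nonneg_right _ hs; linarith [hf1.1]
        _ = Real.sqrt t := one_mul _
        _ ≤ 1/(n+1) := hle
    · have hmax : max (Real.sqrt t) (1/(n+1)) = Real.sqrt t := max_eq_left hlt.le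
      have hft : f n t = 1 := by
        have hrfl : f n t = Real.sqrt t * (max (Real.sqrt t) (1/(n+1)))⁻¹ := rfl
        rw [hrfl, hmax, mul_inv_cancel₀
          ((lt_of_lt_of_le (by positivity : (0:ℝ) < 1/(n+1)) hlt.le).ne')]
      simp [hft]
      positivity
  -- SOT convergence g n → 1
  have hgv : ∀ v : H, Tendsto (fun n => g n v) atTop (𝓝 v) := by
    intro v
    rw [Metric.tendsto_atTop]
    intro ε hε
    have hdr := dense_range_of_sa_inj hb_sa hb_inj
    obtain ⟨w, hw⟩ := hdr.exists_dist_lt v (by positivity : (0:ℝ) < ε/3)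
    have hlim : Tendsto (fun n : ℕ => (1:ℝ)/(n+1) * ‖w‖) atTop (𝓝 0) := by
      simpa using tendsto_one_div_add_atTop_nhds_zero_nat.mul_const ‖w‖
    obtain ⟨N, hN⟩ := (Metric.tendsto_atTop.mp hlim) (ε/3) (by positivity)
    refine ⟨N, fun n hn => ?_⟩
    have hsplit : ((1 : H →L[ℂ] H) - g n) v =
        ((1 : H →L[ℂ] H) - g n) (v - CFC.sqrt a w) + (((1 : H →L[ℂ] H) - g n) * CFC.sqrt a) w := by
      simp only [map_sub, ContinuousLinearMap.mul_apply]
      abel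
    have hdist : dist (g n v) v = ‖((1 : H →L[ℂ] H) - g n) v‖ := by
      rw [dist_eq_norm]
      simp only [ContinuousLinearMap.sub_apply, ContinuousLinearMap.one_apply]
      rw [norm_sub_rev]
    rw [hdist, hsplit]
    have hterm1 : ‖((1 : H →L[ℂ] H) - g n) (v - CFC.sqrt a w)‖ < ε/3 := by
      calc ‖((1 : H →L[ℂ] H) - g n) (v - CFC.sqrt a w)‖
          ≤ ‖(1 : H →L[ℂ] H) - g n‖ * ‖v - CFC.sqrt a w‖ := ContinuousLinearMap.le_opNorm _ _
        _ ≤ 1 * ‖v - CFC.sqrt a w‖ := mul_le_mul_of_nonneg_right (h_norm1 n) (norm_nonneg _)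
        _ = ‖v - CFC.sqrt a w‖ := one_mul _
        _ < ε/3 := by rwa [dist_eq_norm] at hw
    have hterm2 : ‖(((1 : H →L[ℂ] H) - g n) * CFC.sqrt a) w‖ < ε/3 := by
      calc ‖(((1 : H →L[ℂ] H) - g n) * CFC.sqrt a) w‖
          ≤ ‖((1 : H →L[ℂ] H) - g n) * CFC.sqrt a‖ * ‖w‖ := ContinuousLinearMap.le_opNorm _ _
        _ ≤ (1/(n+1)) * ‖w‖ := mul_le_mul_of_nonneg_right (h_norm2 n) (norm_nonneg _)
        _ < ε/3 := by
            have := hN n hn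
            rwa [Real.dist_eq, sub_zero, abs_of_nonneg (by positivity)] at this
    calc ‖((1 : H →L[ℂ] H) - g n) (v - CFC.sqrt a w) +
        (((1 : H →L[ℂ] H) - g n) * CFC.sqrt a) w‖
        ≤ ‖((1 : H →L[ℂ] H) - g n) (v - CFC.sqrt a w)‖ +
          ‖(((1 : H →L[ℂ] H) - g n) * CFC.sqrt a) w‖ := norm_add_le _ _
      _ < ε/3 + ε/3 := add_lt_add hterm1 hterm2
      _ < ε := by linarith
  -- norm bound on g n
  have h_normg : ∀ n, ‖g n‖ ≤ 1 := by
    intro n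
    refine norm_cfc_le zero_le_one fun t ht => ?_
    have := hf_bound n t
    rw [Real.norm_eq_abs, abs_le]
    constructor <;> linarith [this.1, this.2]
  -- moving SOT convergence
  have key2 : ∀ (u : ℕ → H) (u₀ : H), Tendsto u atTop (𝓝 u₀) →
      Tendsto (fun n => g n (u n)) atTop (𝓝 u₀) := by
    intro u u₀ hu
    rw [tendsto_iff_norm_sub_tendsto_zero]
    have hbnd : ∀ n, ‖g n (u n) - u₀‖ ≤ ‖u n - u₀‖ + ‖g n u₀ - u₀‖ := by
      intro n
      calc ‖g n (u n) - u₀‖ = ‖g n (u n - u₀) + (g n u₀ - u₀)‖ := by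
            congr 1; rw [map_sub]; abel
        _ ≤ ‖g n (u n - u₀)‖ + ‖g n u₀ - u₀‖ := norm_add_le _ _
        _ ≤ ‖u n - u₀‖ + ‖g n u₀ - u₀‖ := by
            refine add_le_add ?_ le_rfl
            calc ‖g n (u n - u₀)‖ ≤ ‖g n‖ * ‖u n - u₀‖ := ContinuousLinearMap.le_opNorm _ _
              _ ≤ 1 * ‖u n - u₀‖ := mul_le_mul_of_nonneg_right (h_normg n) (norm_nonneg _)
              _ = ‖u n - u₀‖ := one_mul _
    have h0 : Tendsto (fun n => ‖u n - u₀‖ + ‖g n u₀ - u₀‖) atTop (𝓝 0) := by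
      have h1 := tendsto_iff_norm_sub_tendsto_zero.mp hu
      have h2 := tendsto_iff_norm_sub_tendsto_zero.mp (hgv u₀)
      simpa using h1.add h2
    exact squeeze_zero (fun n => norm_nonneg _) hbnd h0
  -- the master fact, for arbitrary y in M
  have master : ∀ y : H →L[ℂ] H,
      Tendsto (fun n => (ContinuousLinearMapWOT.ofCLM : (H →L[ℂ] H) → (H →WOT[ℂ] H)) (g n * y * g n)) atTop
        (𝓝 ((ContinuousLinearMapWOT.ofCLM : (H →L[ℂ] H) → (H →WOT[ℂ] H)) y)) := by
    intro y
    have hSOT : ∀ v : H, Tendsto (fun n => (g n * y * g n) v) atTop (𝓝 (y v)) := by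
      intro v
      have := key2 (fun n => y (g n v)) (y v) ((y.continuous.tendsto _).comp (hgv v))
      simpa [ContinuousLinearMap.mul_apply, Function.comp] using this
    rw [ContinuousLinearMapWOT.tendsto_iff_forall_dual_apply_tendsto]
    intro x ψ
    exact (ψ.continuous.tendsto _).comp (hSOT x)
  have hfactor : ∀ (y : H →L[ℂ] H) (n : ℕ),
      CFC.sqrt a * (c n * y * c n) * CFC.sqrt a = g n * y * g n := by
    intro y n
    have : CFC.sqrt a * (c n * y * c n) * CFC.sqrt a =
        (CFC.sqrt a * c n) * y * (c n * CFC.sqrt a) := by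
      simp only [mul_assoc]
    rw [this, hbc n, hcb n]
  constructor
  · intro y hy
    apply mem_closure_of_tendsto (master y)
    filter_upwards with n
    exact ⟨g n * y * g n, ⟨c n * y * c n, mul_mem (mul_mem (hcM n) hy) (hcM n),
      (hfactor y n).symm⟩, rfl⟩
  · intro y hy hy_sa
    apply mem_closure_of_tendsto (master y)
    filter_upwards with n
    refine ⟨g n * y * g n, ⟨c n * y * c n, mul_mem (mul_mem (hcM n) hy) (hcM n), ?_,
      (hfactor y n).symm⟩, rfl⟩
    have := hy_sa.conjugate (c n)
    rwa [(hc_sa n).star_eq] at this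
end

section
/- Let a ∈ B(H) be positive and injective and let x ∈ B(H) be selfadjoint. Then sInf { λ ∈ ℝ : −λ·a ≤ √a x √a and √a x √a ≤ λ·a } = ‖x‖, where the inequalities are in the Loewner order on B(H). -/
set_option synthInstance.maxHeartbeats 1000000
set_option maxHeartbeats 1000000

open ContinuousLinearMap in
/-- If `s` is selfadjoint and injective and `0 ≤ s * T * s` with `T` selfadjoint, then `0 ≤ T`. -/
lemma aux_conj_nonneg {H : Type*} [NormedAddCommGroup H] [InnerProductSpace ℂ H]
    [CompleteSpace H] (s T : H →L[ℂ] H) (hs : IsSelfAdjoint s)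
    (hs_inj : Function.Injective s) (hT : IsSelfAdjoint T) (h : 0 ≤ s * T * s) : 0 ≤ T := by
  rw [ContinuousLinearMap.nonneg_iff_isPositive] at h ⊢
  refine ⟨ContinuousLinearMap.isSelfAdjoint_iff_isSymmetric.mp hT, fun w => ?_⟩
  have hdense : closure (Set.range s) = Set.univ := by
    have horth : (LinearMap.range (s : H →ₗ[ℂ] H))ᗮ = ⊥ := by
      rw [Submodule.eq_bot_iff]
      intro v hv
      rw [Submodule.mem_orthogonal] at hv
      have hsv : s v = 0 := by
        have := hv (s (s v)) ⟨s v, rfl⟩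
        rw [← hs.adjoint_eq, ContinuousLinearMap.adjoint_inner_left, hs.adjoint_eq] at this
        exact inner_self_eq_zero.mp this
      exact hs_inj (by simpa using hsv)
    have htop : (LinearMap.range (s : H →ₗ[ℂ] H)).topologicalClosure = ⊤ :=
      Submodule.topologicalClosure_eq_top_iff.mpr horth
    have : (((LinearMap.range (s : H →ₗ[ℂ] H)).topologicalClosure : Submodule ℂ H) : Set H) = Set.univ := by
      rw [htop]; rfl
    rwa [Submodule.topologicalClosure_coe, LinearMap.coe_range] at this
  have hclosed : IsClosed {w : H | 0 ≤ T.reApplyInnerSelf w} :=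
    isClosed_le continuous_const T.reApplyInnerSelf_continuous
  have hsub : Set.range s ⊆ {w : H | 0 ≤ T.reApplyInnerSelf w} := by
    rintro _ ⟨v, rfl⟩
    have h2 := h.2 v
    rw [ContinuousLinearMap.reApplyInnerSelf_apply, ContinuousLinearMap.mul_apply,
      ContinuousLinearMap.mul_apply, ← hs.adjoint_eq, ContinuousLinearMap.adjoint_inner_left,
      hs.adjoint_eq] at h2
    simpa [ContinuousLinearMap.reApplyInnerSelf_apply] using h2
  have hw : w ∈ closure (Set.range s) := by rw [hdense]; trivial
  exact hclosed.closure_subset_iff.mpr hsub hw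

/-- For a positive injective `a ∈ B(H)` and a selfadjoint `x ∈ B(H)`,
`sInf { λ : ℝ | -λ·a ≤ √a x √a ≤ λ·a } = ‖x‖` (Loewner order). -/
theorem stmt2 (H : Type*) [NormedAddCommGroup H] [InnerProductSpace ℂ H] [CompleteSpace H]
    (a : H →L[ℂ] H) (ha_pos : 0 ≤ a) (ha_inj : Function.Injective a)
    (x : H →L[ℂ] H) (hx : IsSelfAdjoint x) :
    sInf {l : ℝ | (-l) • a ≤ CFC.sqrt a * x * CFC.sqrt a ∧
        CFC.sqrt a * x * CFC.sqrt a ≤ l • a} = ‖x‖ := by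
  rcases subsingleton_or_nontrivial H with hH | hH
  · have hset : {l : ℝ | (-l) • a ≤ CFC.sqrt a * x * CFC.sqrt a ∧
        CFC.sqrt a * x * CFC.sqrt a ≤ l • a} = Set.univ := by
      ext l
      simp only [Set.mem_setOf_eq, Set.mem_univ, iff_true]
      exact ⟨le_of_eq (Subsingleton.elim _ _), le_of_eq (Subsingleton.elim _ _)⟩
    have hx0 : ‖x‖ = 0 := by rw [Subsingleton.elim x 0, norm_zero]
    rw [hset, hx0]
    apply Real.sInf_of_not_bddBelow
    rintro ⟨b, hb⟩
    have := hb (Set.mem_univ (b - 1))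
    linarith
  · have hntA : Nontrivial (H →L[ℂ] H) := by
      obtain ⟨v, hv⟩ := exists_ne (0 : H)
      exact ⟨1, 0, fun h => hv (by simpa using DFunLike.congr_fun h v)⟩
    set s := CFC.sqrt a with hs_def
    have hs0 : (0 : H →L[ℂ] H) ≤ s := CFC.sqrt_nonneg a
    have hssa : IsSelfAdjoint s := .of_nonneg hs0
    have hss : s * s = a := CFC.sqrt_mul_sqrt_self a ha_pos
    have hs_inj : Function.Injective s := by
      intro v w h
      apply ha_inj
      rw [← hss]
      simp only [ContinuousLinearMap.mul_apply, h]
    have hca : ∀ r : ℝ, s * algebraMap ℝ (H →L[ℂ] H) r * s = r • a := by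
      intro r
      rw [Algebra.algebraMap_eq_smul_one, mul_smul_comm, mul_one, smul_mul_assoc, hss]
    have hmem : ‖x‖ ∈ {l : ℝ | (-l) • a ≤ s * x * s ∧ s * x * s ≤ l • a} := by
      constructor
      · have h1 : -(algebraMap ℝ (H →L[ℂ] H) ‖x‖) ≤ x := hx.neg_algebraMap_norm_le_self
        have h2 := hssa.conjugate_le_conjugate h1
        calc (-‖x‖) • a = s * algebraMap ℝ (H →L[ℂ] H) (-‖x‖) * s := (hca _).symm
          _ = s * (-(algebraMap ℝ (H →L[ℂ] H) ‖x‖)) * s := by rw [map_neg]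
          _ ≤ s * x * s := h2
      · have h1 : x ≤ algebraMap ℝ (H →L[ℂ] H) ‖x‖ := hx.le_algebraMap_norm_self
        have h2 := hssa.conjugate_le_conjugate h1
        calc s * x * s ≤ s * algebraMap ℝ (H →L[ℂ] H) ‖x‖ * s := h2
          _ = ‖x‖ • a := hca _
    have hlb : ∀ l ∈ {l : ℝ | (-l) • a ≤ s * x * s ∧ s * x * s ≤ l • a}, ‖x‖ ≤ l := by
      rintro l ⟨h1, h2⟩
      have hsal : IsSelfAdjoint (algebraMap ℝ (H →L[ℂ] H) l) :=
        IsSelfAdjoint.algebraMap _ (IsSelfAdjoint.all l)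
      have hxle : x ≤ algebraMap ℝ (H →L[ℂ] H) l := by
        have hkey : (0 : H →L[ℂ] H) ≤ s * (algebraMap ℝ (H →L[ℂ] H) l - x) * s := by
          have : s * (algebraMap ℝ (H →L[ℂ] H) l - x) * s = l • a - s * x * s := by
            rw [mul_sub, sub_mul, hca]
          rw [this, sub_nonneg]
          exact h2
        have := aux_conj_nonneg s _ hssa hs_inj (hsal.sub hx) hkey
        rwa [sub_nonneg] at this
      have hlex : -(algebraMap ℝ (H →L[ℂ] H) l) ≤ x := by
        have hkey : (0 : H →L[ℂ] H) ≤ s * (x + algebraMap ℝ (H →L[ℂ] H) l) * s := by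
          have : s * (x + algebraMap ℝ (H →L[ℂ] H) l) * s = s * x * s + l • a := by
            rw [mul_add, add_mul, hca]
          rw [this]
          have : (0 : H →L[ℂ] H) ≤ s * x * s - (-l) • a := sub_nonneg.mpr h1
          calc (0 : H →L[ℂ] H) ≤ s * x * s - (-l) • a := this
            _ = s * x * s + l • a := by rw [neg_smul, sub_neg_eq_add]
        have := aux_conj_nonneg s _ hssa hs_inj (hx.add hsal) hkey
        rwa [← sub_nonneg, sub_neg_eq_add]
      have hnorm : ‖x‖ ≤ l := by
        rcases CStarAlgebra.norm_or_neg_norm_mem_spectrum hx with hsp | hsp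
        · exact (le_algebraMap_iff_spectrum_le hx).mp hxle _ hsp
        · have : -(algebraMap ℝ (H →L[ℂ] H) l) = algebraMap ℝ (H →L[ℂ] H) (-l) := by
            rw [map_neg]
          rw [this] at hlex
          have := (algebraMap_le_iff_le_spectrum hx).mp hlex _ hsp
          linarith
      exact hnorm
    exact le_antisymm (csInf_le ⟨‖x‖, hlb⟩ hmem) (le_csInf ⟨‖x‖, hmem⟩ hlb)
end

section
/- Let a ∈ B(H) be positive (not necessarily injective), let x ∈ B(H) be selfadjoint, and let K := (ker a)^⊥ with orthogonal projection P_K : H → K and inclusion ι_K : K → H. Then sInf { λ ∈ ℝ : 0 ≤ λ and for all f ∈ H, |Re⟪√a f, x(√a f)⟫| ≤ λ·‖√a f‖² } = ‖P_K ∘ x ∘ ι_K‖, the operator norm of the compression of x to K. -/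
set_option synthInstance.maxHeartbeats 1000000
set_option maxHeartbeats 1000000

open scoped InnerProductSpace

/-- Quantitative bound: a symmetric operator with `|Re⟪g, T g⟫| ≤ l‖g‖²` has norm `≤ l`. -/
lemma aux_norm_le {K : Type*} [NormedAddCommGroup K] [InnerProductSpace ℂ K]
    (T : K →L[ℂ] K) (hsym : ∀ u v : K, ⟪u, T v⟫_ℂ = ⟪T u, v⟫_ℂ) {l : ℝ} (hl : 0 ≤ l)
    (h : ∀ g : K, |(⟪g, T g⟫_ℂ).re| ≤ l * ‖g‖ ^ 2) : ‖T‖ ≤ l := by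
  have key : ∀ u v : K, 4 * (⟪u, T v⟫_ℂ).re =
      (⟪u + v, T (u + v)⟫_ℂ).re - (⟪u - v, T (u - v)⟫_ℂ).re := by
    intro u v
    have h1 : (⟪v, T u⟫_ℂ).re = (⟪u, T v⟫_ℂ).re := by
      rw [hsym v u, ← inner_conj_symm (T v) u, Complex.conj_re]
    simp only [map_add, map_sub, inner_add_left, inner_add_right, inner_sub_left,
      inner_sub_right, Complex.add_re, Complex.sub_re]
    linarith
  refine T.opNorm_le_bound hl fun u => ?_
  rcases eq_or_ne (T u) 0 with h0 | h0
  · simp [h0, mul_nonneg hl (norm_nonneg u)]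
  rcases eq_or_ne u 0 with hu | hu
  · simp [hu]
  set c : ℝ := ‖u‖ / ‖T u‖ with hc
  have hTu : (0:ℝ) < ‖T u‖ := norm_pos_iff.mpr h0
  have hune : (0:ℝ) < ‖u‖ := norm_pos_iff.mpr hu
  have hcpos : 0 < c := div_pos hune hTu
  set v : K := (c : ℂ) • T u with hv
  have hre : (⟪v, T u⟫_ℂ).re = ‖u‖ * ‖T u‖ := by
    rw [hv, inner_smul_left, inner_self_eq_norm_sq_to_K]
    simp only [RCLike.conj_ofReal, ← RCLike.ofReal_pow, ← RCLike.ofReal_mul, RCLike.ofReal_re, hc]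
    simp only [Complex.conj_ofReal, Complex.coe_algebraMap, RCLike.ofReal_eq_complex_ofReal, ← Complex.ofReal_mul, Complex.ofReal_re]
    field_simp
  have hnv : ‖v‖ = ‖u‖ := by
    rw [hv, norm_smul]
    rw [Complex.norm_real, Real.norm_eq_abs, abs_of_pos hcpos, hc]
    field_simp
  have h4 := key v u
  have hb1 := h (v + u)
  have hb2 := h (v - u)
  have habs1 : (⟪v + u, T (v + u)⟫_ℂ).re ≤ l * ‖v + u‖ ^ 2 := (abs_le.mp hb1).2
  have habs2 : -(l * ‖v - u‖ ^ 2) ≤ (⟪v - u, T (v - u)⟫_ℂ).re := (abs_le.mp hb2).1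
  have hpar : ‖v + u‖ ^ 2 + ‖v - u‖ ^ 2 = 2 * (‖v‖ ^ 2 + ‖u‖ ^ 2) := by
    have := parallelogram_law_with_norm ℂ v u
    ring_nf
    ring_nf at this
    linarith
  have : 4 * (‖u‖ * ‖T u‖) ≤ l * (‖v + u‖ ^ 2 + ‖v - u‖ ^ 2) := by
    rw [← hre, h4]
    have := mul_nonneg hl (sq_nonneg ‖v - u‖)
    nlinarith
  rw [hpar, hnv] at this
  have h2 : 4 * (‖u‖ * ‖T u‖) ≤ 4 * (l * ‖u‖ * ‖u‖) := by nlinarith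
  have h3 : ‖u‖ * ‖T u‖ ≤ ‖u‖ * (l * ‖u‖) := by nlinarith
  exact le_of_mul_le_mul_left (by linarith [h3]) hune

/-- For positive `a ∈ B(H)`, selfadjoint `x ∈ B(H)` and `K := (ker a)ᗮ`,
`sInf { λ ≥ 0 | ∀ f, |Re⟪√a f, x (√a f)⟫| ≤ λ‖√a f‖² } = ‖P_K ∘ x ∘ ι_K‖`. -/
theorem stmt4 (H : Type*) [NormedAddCommGroup H] [InnerProductSpace ℂ H] [CompleteSpace H]
    (a : H →L[ℂ] H) (ha_pos : 0 ≤ a) (x : H →L[ℂ] H) (hx : IsSelfAdjoint x) :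
    sInf {l : ℝ | 0 ≤ l ∧ ∀ f : H,
        |(⟪CFC.sqrt a f, x (CFC.sqrt a f)⟫_ℂ).re| ≤ l * ‖CFC.sqrt a f‖ ^ 2} =
      ‖(Submodule.orthogonalProjectionOnto (LinearMap.ker (a : H →ₗ[ℂ] H))ᗮ).comp
          (x.comp (LinearMap.ker (a : H →ₗ[ℂ] H))ᗮ.subtypeL)‖ := by
  set b : H →L[ℂ] H := CFC.sqrt a with hbdef
  have hb_nonneg : 0 ≤ b := CFC.sqrt_nonneg a
  have hb_sa : IsSelfAdjoint b := hb_nonneg.isSelfAdjoint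
  have hbb : b * b = a := CFC.sqrt_mul_sqrt_self a ha_pos
  set K : Submodule ℂ H := (LinearMap.ker (a : H →ₗ[ℂ] H))ᗮ with hK
  haveI hKproj : Submodule.HasOrthogonalProjection K :=
    inferInstanceAs (Submodule.HasOrthogonalProjection (LinearMap.ker (a : H →ₗ[ℂ] H))ᗮ)
  set c : K →L[ℂ] K := (Submodule.orthogonalProjectionOnto K).comp (x.comp K.subtypeL) with hc
  -- inner product identity for the compression
  have hinner : ∀ u v : K, ⟪u, c v⟫_ℂ = ⟪(u : H), x v⟫_ℂ := by
    intro u v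
    show ⟪u, Submodule.orthogonalProjectionOnto K (x (v : H))⟫_ℂ = ⟪(u : H), x (v : H)⟫_ℂ
    exact Submodule.inner_orthogonalProjectionOnto_eq_of_mem_left u (x (v : H))
  -- adjoint symmetry facts
  have hbadj : ∀ u v : H, ⟪b u, v⟫_ℂ = ⟪u, b v⟫_ℂ := fun u v => by
    conv_lhs => rw [← hb_sa.adjoint_eq]
    exact ContinuousLinearMap.adjoint_inner_left b v u
  have hxadj : ∀ u v : H, ⟪u, x v⟫_ℂ = ⟪x u, v⟫_ℂ := fun u v => by
    conv_rhs => rw [← hx.adjoint_eq]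
    exact (ContinuousLinearMap.adjoint_inner_left x v u).symm
  -- ker a ≤ ker b
  have hker : ∀ u : H, a u = 0 → b u = 0 := by
    intro u hu
    have : ⟪b u, b u⟫_ℂ = 0 := by
      rw [hbadj]
      have hba : b (b u) = a u := by rw [← hbb]; rfl
      rw [hba, hu, inner_zero_right]
    exact inner_self_eq_zero.mp this
  -- range b ⊆ K
  have hrange : ∀ f : H, b f ∈ K := by
    intro f
    rw [hK, Submodule.mem_orthogonal]
    intro u hu
    rw [← hbadj, hker u (LinearMap.mem_ker.mp hu), inner_zero_left]
  -- K ⊆ closure of range b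
  have hdense : (K : Set H) ⊆ closure (Set.range b) := by
    have h1 : (LinearMap.range (b : H →ₗ[ℂ] H))ᗮ ≤ LinearMap.ker (a : H →ₗ[ℂ] H) := by
      intro v hv
      rw [LinearMap.mem_ker, ← hbb]
      have hbv : b v = 0 := by
        rw [← inner_self_eq_zero (𝕜 := ℂ), hbadj]
        exact (Submodule.mem_orthogonal' _ _|>.mp hv) _ (LinearMap.mem_range_self _ _)
      show b (b v) = 0
      rw [hbv, map_zero]
    have h2 : K ≤ (LinearMap.range (b : H →ₗ[ℂ] H)).topologicalClosure := by
      rw [← Submodule.orthogonal_orthogonal_eq_closure]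
      exact Submodule.orthogonal_le h1
    intro w hw
    have h3 : w ∈ (((LinearMap.range (b : H →ₗ[ℂ] H)).topologicalClosure : Submodule ℂ H) : Set H) := h2 hw
    rw [Submodule.topologicalClosure_coe] at h3
    simpa [LinearMap.coe_range] using h3
  have hset : {l : ℝ | 0 ≤ l ∧ ∀ f : H,
      |(⟪b f, x (b f)⟫_ℂ).re| ≤ l * ‖b f‖ ^ 2} = Set.Ici ‖c‖ := by
    ext l
    simp only [Set.mem_setOf_eq, Set.mem_Ici]
    constructor
    · rintro ⟨hl0, hl⟩
      -- extend bound to all of K by density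
      have hclosed : IsClosed {w : H | |(⟪w, x w⟫_ℂ).re| ≤ l * ‖w‖ ^ 2} := by
        apply isClosed_le
        · exact (Complex.continuous_re.comp (continuous_id.inner x.continuous)).abs
        · fun_prop
      have hKbound : ∀ w : H, w ∈ K → |(⟪w, x w⟫_ℂ).re| ≤ l * ‖w‖ ^ 2 := by
        intro w hw
        refine hclosed.closure_subset_iff.mpr ?_ (hdense hw)
        rintro _ ⟨f, rfl⟩
        exact hl f
      have hsym : ∀ u v : K, ⟪u, c v⟫_ℂ = ⟪c u, v⟫_ℂ := by
        intro u v
        rw [hinner, hxadj, ← inner_conj_symm, ← hinner, inner_conj_symm]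
      refine aux_norm_le c hsym hl0 fun g => ?_
      have := hKbound (g : H) g.2
      simpa [hinner g g] using this
    · intro hl
      have hl0 : 0 ≤ l := le_trans (norm_nonneg c) hl
      refine ⟨hl0, fun f => ?_⟩
      set g : K := ⟨b f, hrange f⟩ with hg
      have h1 : ⟪b f, x (b f)⟫_ℂ = ⟪g, c g⟫_ℂ := (hinner g g).symm
      calc |(⟪b f, x (b f)⟫_ℂ).re| ≤ ‖⟪b f, x (b f)⟫_ℂ‖ := Complex.abs_re_le_norm _
        _ = ‖⟪g, c g⟫_ℂ‖ := by rw [h1]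
        _ ≤ ‖g‖ * ‖c g‖ := norm_inner_le_norm _ _
        _ ≤ ‖g‖ * (‖c‖ * ‖g‖) := by
            exact mul_le_mul_of_nonneg_left (c.le_opNorm g) (norm_nonneg g)
        _ ≤ ‖g‖ * (l * ‖g‖) := by
            have := mul_le_mul_of_nonneg_right hl (norm_nonneg g)
            exact mul_le_mul_of_nonneg_left this (norm_nonneg g)
        _ = l * ‖b f‖ ^ 2 := by
            have : ‖g‖ = ‖b f‖ := rfl
            rw [this]; ring
  rw [hset, csInf_Ici]
end

section
/- Let a ∈ B(H) be positive and injective, and let B : H × H → ℂ be a sesquilinear form (conjugate-linear in the first argument, linear in the second) which is hermitian, i.e. B(f,g) = conj(B(g,f)) for all f,g ∈ H, and satisfies |B(f,f)| ≤ ‖√a f‖² for all f ∈ H. Then there exists a selfadjoint operator y ∈ B(H) with ‖y‖ ≤ 1 such that B(f,g) = ⟪√a f, y(√a g)⟫ for all f, g ∈ H. -/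
set_option synthInstance.maxHeartbeats 1000000
set_option maxHeartbeats 1000000

open scoped InnerProductSpace

/-- Let `a ∈ B(H)` be positive injective and `B` a hermitian sesquilinear
form (conjugate-linear in the first variable) with `|B(f,f)| ≤ ‖√a f‖²` for all `f`.
Then there is a selfadjoint `y ∈ B(H)` with `‖y‖ ≤ 1` and
`B(f,g) = ⟪√a f, y (√a g)⟫` for all `f, g`. -/
theorem stmt5 (H : Type*) [NormedAddCommGroup H] [InnerProductSpace ℂ H] [CompleteSpace H]
    (a : H →L[ℂ] H) (ha_pos : 0 ≤ a) (ha_inj : Function.Injective a)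
    (B : H →ₗ⋆[ℂ] H →ₗ[ℂ] ℂ)
    (hB_herm : ∀ f g : H, B f g = starRingEnd ℂ (B g f))
    (hB_bdd : ∀ f : H, ‖B f f‖ ≤ ‖CFC.sqrt a f‖ ^ 2) :
    ∃ y : H →L[ℂ] H, IsSelfAdjoint y ∧ ‖y‖ ≤ 1 ∧
      ∀ f g : H, B f g = ⟪CFC.sqrt a f, y (CFC.sqrt a g)⟫_ℂ := by
  set s : H →L[ℂ] H := CFC.sqrt a with hs_def
  -- basic facts about s
  have hs_nonneg : (0 : H →L[ℂ] H) ≤ s := CFC.sqrt_nonneg a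
  have hs_sa : IsSelfAdjoint s :=
    ((ContinuousLinearMap.nonneg_iff_isPositive s).mp hs_nonneg).isSelfAdjoint
  have hs_mul : ∀ f : H, s (s f) = a f := by
    intro f
    have h : s * s = a := CFC.sqrt_mul_sqrt_self a ha_pos
    calc s (s f) = (s * s) f := rfl
    _ = a f := by rw [h]
  have hs_adj : ∀ f g : H, ⟪s f, g⟫_ℂ = ⟪f, s g⟫_ℂ := by
    intro f g
    conv_lhs => rw [← hs_sa.adjoint_eq]
    exact ContinuousLinearMap.adjoint_inner_left s g f
  have hs_inj : Function.Injective s := by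
    intro f g h
    have h1 : s (f - g) = 0 := by rw [map_sub, h, sub_self]
    have h2 : a (f - g) = a 0 := by rw [← hs_mul, h1, map_zero, map_zero]
    have h3 := ha_inj h2
    rwa [sub_eq_zero] at h3
  -- Cauchy-Schwarz type bound
  have hpolar : ∀ f g : H,
      (B (f+g)) (f+g) - (B (f-g)) (f-g) = ((4 * (B f g).re : ℝ) : ℂ) := by
    intro f g
    have h1 : (B (f+g)) (f+g) - (B (f-g)) (f-g) = 2 * (B f g + B g f) := by
      simp only [map_add, map_sub, LinearMap.add_apply, LinearMap.sub_apply]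
      ring
    have h2 : B f g + B g f = 2 * ((B f g).re : ℂ) := by
      rw [hB_herm g f, Complex.add_conj]
      push_cast
      ring
    rw [h1, h2]; push_cast; ring
  have hRe : ∀ f g : H, |(B f g).re| ≤ (‖s f‖^2 + ‖s g‖^2) / 2 := by
    intro f g
    have hpol := congrArg Complex.re (hpolar f g)
    simp only [Complex.sub_re, Complex.ofReal_re] at hpol
    have h1 : |(B (f+g) (f+g)).re| ≤ ‖s (f+g)‖^2 :=
      le_trans (Complex.abs_re_le_norm _) (hB_bdd _)
    have h2 : |(B (f-g) (f-g)).re| ≤ ‖s (f-g)‖^2 :=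
      le_trans (Complex.abs_re_le_norm _) (hB_bdd _)
    have hpar : ‖s (f+g)‖^2 + ‖s (f-g)‖^2 = 2*(‖s f‖^2 + ‖s g‖^2) := by
      have h := parallelogram_law_with_norm ℂ (s f) (s g)
      rw [← map_add, ← map_sub] at h
      simp only [pow_two]; linarith
    obtain ⟨h1l, h1r⟩ := abs_le.mp h1
    obtain ⟨h2l, h2r⟩ := abs_le.mp h2
    rw [abs_le]
    constructor <;> [nlinarith; nlinarith]
  have hRe_scaled : ∀ f g : H, ∀ t : ℝ, 0 < t →
      |(B f g).re| ≤ (t^2 * ‖s f‖^2 + ‖s g‖^2 / t^2) / 2 := by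
    intro f g t ht
    have ht' : (t : ℂ) ≠ 0 := by exact_mod_cast ht.ne'
    have hsmul : B ((t:ℂ) • f) (((t⁻¹ : ℝ):ℂ) • g) = B f g := by
      simp only [LinearMap.map_smulₛₗ, LinearMap.smul_apply, LinearMap.map_smul,
        smul_eq_mul, Complex.conj_ofReal]
      push_cast
      field_simp
      simp only [id_eq, mul_one_div_cancel ht', one_mul]
    have hbound := hRe ((t:ℂ) • f) (((t⁻¹ : ℝ):ℂ) • g)
    rw [hsmul] at hbound
    have hnf : ‖s ((t:ℂ) • f)‖ = t * ‖s f‖ := by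
      rw [map_smul, norm_smul, Complex.norm_real, Real.norm_eq_abs, abs_of_pos ht]
    have hng : ‖s (((t⁻¹ : ℝ):ℂ) • g)‖ = t⁻¹ * ‖s g‖ := by
      rw [map_smul, norm_smul, Complex.norm_real, Real.norm_eq_abs,
        abs_of_pos (inv_pos.mpr ht)]
    rw [hnf, hng] at hbound
    calc |(B f g).re| ≤ ((t * ‖s f‖)^2 + (t⁻¹ * ‖s g‖)^2) / 2 := hbound
    _ = (t^2 * ‖s f‖^2 + ‖s g‖^2 / t^2) / 2 := by
        field_simp
  have hRe_CS : ∀ f g : H, |(B f g).re| ≤ ‖s f‖ * ‖s g‖ := by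
    intro f g
    rcases eq_or_ne (s f) 0 with hf | hf
    · have hf0 : f = 0 := hs_inj (by rw [hf, map_zero])
      simp [hf0]
    · rcases eq_or_ne (s g) 0 with hg | hg
      · have hg0 : g = 0 := hs_inj (by rw [hg, map_zero])
        simp [hg0]
      · have hf' : 0 < ‖s f‖ := norm_pos_iff.mpr hf
        have hg' : 0 < ‖s g‖ := norm_pos_iff.mpr hg
        set t := Real.sqrt (‖s g‖ / ‖s f‖) with ht_def
        have ht : 0 < t := Real.sqrt_pos.mpr (div_pos hg' hf')
        have ht2 : t^2 = ‖s g‖ / ‖s f‖ := Real.sq_sqrt (le_of_lt (div_pos hg' hf'))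
        have hb := hRe_scaled f g t ht
        rw [ht2] at hb
        have heq : ((‖s g‖ / ‖s f‖) * ‖s f‖^2 + ‖s g‖^2 / (‖s g‖ / ‖s f‖)) / 2
            = ‖s f‖ * ‖s g‖ := by
          field_simp
          ring
        rw [heq] at hb
        exact hb
  have hCS : ∀ f g : H, ‖B f g‖ ≤ ‖s f‖ * ‖s g‖ := by
    intro f g
    rcases eq_or_ne (B f g) 0 with h0 | h0
    · simp [h0]
      positivity
    · have habs : (‖B f g‖ : ℝ) ≠ 0 := by
        simpa using h0
      set c : ℂ := B f g / (‖B f g‖ : ℂ) with hc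
      have hcnorm : ‖c‖ = 1 := by
        rw [hc, norm_div]
        simp only [Complex.norm_real, Real.norm_eq_abs]
        rw [abs_of_nonneg (norm_nonneg _)]
        field_simp
      have key : B (c • f) g = (‖B f g‖ : ℂ) := by
        simp only [LinearMap.map_smulₛₗ, LinearMap.smul_apply, smul_eq_mul]
        rw [hc, map_div₀, Complex.conj_ofReal, div_mul_eq_mul_div]
        rw [mul_comm ((starRingEnd ℂ) (B f g)) (B f g), Complex.mul_conj]
        rw [Complex.normSq_eq_norm_sq]
        rw [div_eq_iff (by exact_mod_cast habs)]
        push_cast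
        ring
      have hb := hRe_CS (c • f) g
      rw [key] at hb
      have hre : ((‖B f g‖ : ℂ)).re = ‖B f g‖ := Complex.ofReal_re _
      rw [hre, abs_of_nonneg (norm_nonneg _)] at hb
      have hnc : ‖s (c • f)‖ = ‖s f‖ := by
        rw [map_smul, norm_smul, hcnorm, one_mul]
      rwa [hnc] at hb
  -- dense range of s
  set R : Submodule ℂ H := LinearMap.range (s : H →ₗ[ℂ] H) with hR_def
  have hR_mem : ∀ x : H, x ∈ R ↔ ∃ f : H, s f = x := by
    intro x
    simp [hR_def, LinearMap.mem_range]
  have hR_dense : Dense (R : Set H) := by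
    have horth : Rᗮ = ⊥ := by
      rw [Submodule.eq_bot_iff]
      intro x hx
      have h1 : ∀ f : H, ⟪f, s x⟫_ℂ = 0 := by
        intro f
        rw [← hs_adj]
        exact (Submodule.mem_orthogonal R x).mp hx (s f) ((hR_mem (s f)).mpr ⟨f, rfl⟩)
      have h2 : s x = 0 := by
        have := h1 (s x)
        rwa [inner_self_eq_zero] at this
      exact hs_inj (by rw [h2, map_zero])
    have htop : R.topologicalClosure = ⊤ :=
      Submodule.topologicalClosure_eq_top_iff.mpr horth
    rw [← Submodule.dense_iff_topologicalClosure_eq_top] at htop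
    exact htop
  have hdR : DenseRange R.subtypeL := by
    have : Set.range (R.subtypeL) = (R : Set H) := Subtype.range_coe
    rw [DenseRange, this]
    exact hR_dense
  have h_e : ∀ x : R, ‖x‖ ≤ ((1:NNReal) : ℝ) * ‖R.subtypeL x‖ := by
    intro x
    simp
  let e : H ≃ₗ[ℂ] R := LinearEquiv.ofInjective (s : H →ₗ[ℂ] H) hs_inj
  have he_coe : ∀ f : H, ((e f : R) : H) = s f := by
    intro f
    rfl
  -- existence of representing vectors
  have hw : ∀ g : H, ∃ w : H, ‖w‖ ≤ ‖s g‖ ∧ ∀ f : H, ⟪s f, w⟫_ℂ = B f g := by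
    intro g
    set φ : R →ₗ[ℂ] ℂ := (B g).comp (e.symm : R →ₗ[ℂ] H) with hφ_def
    have hφ_bound : ∀ x : R, ‖φ x‖ ≤ ‖s g‖ * ‖x‖ := by
      intro x
      obtain ⟨f, rfl⟩ : ∃ f, e f = x := ⟨e.symm x, e.apply_symm_apply x⟩
      have h1 : φ (e f) = B g f := by
        simp [hφ_def]
      rw [h1]
      have h2 : ‖(e f : R)‖ = ‖s f‖ := by
        exact (Submodule.norm_coe (e f)).symm
      calc ‖B g f‖ = ‖B g f‖ := rfl
      _ ≤ ‖s g‖ * ‖s f‖ := hCS g f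
      _ = ‖s g‖ * ‖(e f : R)‖ := by rw [h2]
    set φc : R →L[ℂ] ℂ := LinearMap.mkContinuous φ ‖s g‖ hφ_bound with hφc_def
    set Φ : H →L[ℂ] ℂ := φc.extend R.subtypeL
      with hΦ_def
    have hΦ_norm : ‖Φ‖ ≤ ‖s g‖ := by
      have h1 := ContinuousLinearMap.opNorm_extend_le φc hdR h_e
      have h2 : ‖φc‖ ≤ ‖s g‖ := LinearMap.mkContinuous_norm_le φ (norm_nonneg _) hφ_bound
      calc ‖Φ‖ ≤ ((1:NNReal):ℝ) * ‖φc‖ := h1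
      _ = ‖φc‖ := by simp
      _ ≤ ‖s g‖ := h2
    have hΦ_eq : ∀ f : H, Φ (s f) = B g f := by
      intro f
      have h1 : s f = R.subtypeL (e f) := (he_coe f).symm
      rw [h1, hΦ_def, ContinuousLinearMap.extend_eq _ hdR
      (ContinuousLinearMap.isUniformEmbedding_of_bound R.subtypeL h_e).isUniformInducing]
      show φ (e f) = B g f
      simp [hφ_def]
    refine ⟨(InnerProductSpace.toDual ℂ H).symm Φ, ?_, ?_⟩
    · calc ‖(InnerProductSpace.toDual ℂ H).symm Φ‖ = ‖Φ‖ :=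
        LinearIsometryEquiv.norm_map _ Φ
      _ ≤ ‖s g‖ := hΦ_norm
    · intro f
      rw [← inner_conj_symm, InnerProductSpace.toDual_symm_apply, hΦ_eq f]
      exact (hB_herm f g).symm
  -- uniqueness of representing vectors
  have huniq : ∀ w w' : H, (∀ f : H, ⟪s f, w⟫_ℂ = ⟪s f, w'⟫_ℂ) → w = w' := by
    intro w w' h
    have hall : ∀ x : H, ⟪x, w⟫_ℂ = ⟪x, w'⟫_ℂ := by
      have hc1 : Continuous fun x : H => ⟪x, w⟫_ℂ := continuous_id.inner continuous_const
      have hc2 : Continuous fun x : H => ⟪x, w'⟫_ℂ := continuous_id.inner continuous_const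
      have heq := Continuous.ext_on hR_dense hc1 hc2 ?_
      · exact fun x => congrFun heq x
      · intro x hx
        obtain ⟨f, rfl⟩ := (hR_mem x).mp hx
        exact h f
    have h2 := hall (w - w')
    have h3 : ⟪w - w', w - w'⟫_ℂ = 0 := by
      rw [inner_sub_right, h2, sub_self]
    exact sub_eq_zero.mp (inner_self_eq_zero.mp h3)
  -- the map W
  set W : H → H := fun g => Classical.choose (hw g) with hW_def
  have hW1 : ∀ g : H, ‖W g‖ ≤ ‖s g‖ := fun g => (Classical.choose_spec (hw g)).1
  have hW2 : ∀ g f : H, ⟪s f, W g⟫_ℂ = B f g := fun g => (Classical.choose_spec (hw g)).2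
  have hW_add : ∀ g g' : H, W (g + g') = W g + W g' := by
    intro g g'
    apply huniq
    intro f
    rw [hW2, inner_add_right, hW2, hW2, map_add]
  have hW_smul : ∀ (c : ℂ) (g : H), W (c • g) = c • W g := by
    intro c g
    apply huniq
    intro f
    rw [hW2, inner_smul_right, hW2, map_smul, smul_eq_mul]
  set Wl : H →ₗ[ℂ] H :=
    { toFun := W, map_add' := hW_add, map_smul' := hW_smul } with hWl_def
  set T : R →ₗ[ℂ] H := Wl.comp (e.symm : R →ₗ[ℂ] H) with hT_def
  have hT_bound : ∀ x : R, ‖T x‖ ≤ 1 * ‖x‖ := by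
    intro x
    obtain ⟨f, rfl⟩ : ∃ f, e f = x := ⟨e.symm x, e.apply_symm_apply x⟩
    have h1 : T (e f) = W f := by simp [hT_def, hWl_def]
    rw [h1, one_mul]
    calc ‖W f‖ ≤ ‖s f‖ := hW1 f
    _ = ‖(e f : R)‖ := (Submodule.norm_coe (e f))
  set Tc : R →L[ℂ] H := LinearMap.mkContinuous T 1 hT_bound with hTc_def
  set y : H →L[ℂ] H := Tc.extend R.subtypeL
    with hy_def
  have hy_s : ∀ g : H, y (s g) = W g := by
    intro g
    have h1 : s g = R.subtypeL (e g) := (he_coe g).symm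
    rw [h1, hy_def, ContinuousLinearMap.extend_eq _ hdR
      (ContinuousLinearMap.isUniformEmbedding_of_bound R.subtypeL h_e).isUniformInducing]
    show T (e g) = W g
    simp [hT_def, hWl_def]
  have hy_main : ∀ f g : H, B f g = ⟪s f, y (s g)⟫_ℂ := by
    intro f g
    rw [hy_s, hW2]
  have hy_norm : ‖y‖ ≤ 1 := by
    have h1 := ContinuousLinearMap.opNorm_extend_le Tc hdR h_e
    have h2 : ‖Tc‖ ≤ 1 := LinearMap.mkContinuous_norm_le T zero_le_one hT_bound
    calc ‖y‖ ≤ ((1:NNReal):ℝ) * ‖Tc‖ := h1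
    _ = ‖Tc‖ := by simp
    _ ≤ 1 := h2
  have hsym0 : ∀ f g : H, ⟪y (s f), s g⟫_ℂ = ⟪s f, y (s g)⟫_ℂ := by
    intro f g
    conv_lhs => rw [← inner_conj_symm]
    rw [← hy_main g f, ← hB_herm, hy_main f g]
  have hsym1 : ∀ f x' : H, ⟪y (s f), x'⟫_ℂ = ⟪s f, y x'⟫_ℂ := by
    intro f
    have hc1 : Continuous fun x' : H => ⟪y (s f), x'⟫_ℂ :=
      continuous_const.inner continuous_id
    have hc2 : Continuous fun x' : H => ⟪s f, y x'⟫_ℂ :=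
      continuous_const.inner y.continuous
    have heq := Continuous.ext_on hR_dense hc1 hc2 ?_
    · exact fun x' => congrFun heq x'
    · intro x hx
      obtain ⟨g, rfl⟩ := (hR_mem x).mp hx
      exact hsym0 f g
  have hsym : ∀ x x' : H, ⟪y x, x'⟫_ℂ = ⟪x, y x'⟫_ℂ := by
    intro x x'
    have hc1 : Continuous fun x : H => ⟪y x, x'⟫_ℂ :=
      y.continuous.inner continuous_const
    have hc2 : Continuous fun x : H => ⟪x, y x'⟫_ℂ :=
      continuous_id.inner continuous_const
    have heq := Continuous.ext_on hR_dense hc1 hc2 ?_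
    · exact congrFun heq x
    · intro x hx
      obtain ⟨f, rfl⟩ := (hR_mem x).mp hx
      exact hsym1 f x'
  have hy_sa : IsSelfAdjoint y :=
    ContinuousLinearMap.isSelfAdjoint_iff_isSymmetric.mpr (fun x x' => hsym x x')
  exact ⟨y, hy_sa, hy_norm, fun f g => hy_main f g⟩
end

section
/- Let A be a unital C*-algebra and let a ∈ A with 0 ≤ a. Then the seminorm f ↦ ‖√a·f·√a‖ on the continuous dual of A is a norm (equivalently: √a·f·√a = 0 implies f = 0 for every continuous linear functional f on A) if and only if Re(φ(a)) > 0 for every nonzero positive continuous linear functional φ on A. -/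
set_option synthInstance.maxHeartbeats 1000000
set_option maxHeartbeats 1000000

open scoped ComplexOrder

/-- For `a` in a unital C*-algebra `A` and a continuous linear functional `f` on `A`,
`sandwich a f` is the continuous linear functional `x ↦ f (√a * x * √a)`. -/
noncomputable def sandwich {A : Type*} [CStarAlgebra A] [PartialOrder A] [StarOrderedRing A]
    (a : A) (f : A →L[ℂ] ℂ) : A →L[ℂ] ℂ :=
  f.comp ((ContinuousLinearMap.mul ℂ A (CFC.sqrt a)).comp
    ((ContinuousLinearMap.mul ℂ A).flip (CFC.sqrt a)))

lemma sandwich_apply {A : Type*} [CStarAlgebra A] [PartialOrder A] [StarOrderedRing A]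
    (a : A) (f : A →L[ℂ] ℂ) (x : A) :
    sandwich a f x = f (CFC.sqrt a * x * CFC.sqrt a) := by
  simp [sandwich, mul_assoc]

lemma aux_u (e u : ℂ) (h : ∀ s : ℝ, 0 ≤ e + s * u) : u = 0 := by
  have him : ∀ s : ℝ, e.im + s * u.im = 0 := by
    intro s
    have := (Complex.le_def.mp (h s)).2
    simpa using this.symm
  have hui : u.im = 0 := by
    have h0 := him 0; have h1 := him 1; nlinarith
  have hre : ∀ s : ℝ, 0 ≤ e.re + s * u.re := by
    intro s
    have := (Complex.le_def.mp (h s)).1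
    simpa using this
  have hur : u.re = 0 := by
    by_contra hu
    have h1 := hre ((-e.re - 1) / u.re)
    rw [div_mul_cancel₀ _ hu] at h1
    linarith
  exact Complex.ext hur hui

lemma cs {A : Type*} [CStarAlgebra A] [PartialOrder A] [StarOrderedRing A]
    (φ : A →L[ℂ] ℂ) (hφ : ∀ x : A, 0 ≤ x → 0 ≤ φ x)
    (y : A) (hy : φ (star y * y) = 0) (x : A) : φ (star y * x) = 0 := by
  set c := φ (star y * x) with hc
  set d := φ (star x * y) with hd
  set e := φ (star x * x) with he
  have key : ∀ t : ℂ, 0 ≤ e + (starRingEnd ℂ t) * c + t * d := by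
    intro t
    have h0 : (0:ℂ) ≤ φ (star (x + t • y) * (x + t • y)) :=
      hφ _ (star_mul_self_nonneg _)
    have exp : star (x + t • y) * (x + t • y)
        = star x * x + t • (star x * y) + (starRingEnd ℂ t) • (star y * x)
          + ((starRingEnd ℂ t) * t) • (star y * y) := by
      simp only [star_add, star_smul, add_mul, mul_add, smul_mul_assoc, mul_smul_comm,
        smul_smul, Complex.star_def]
      rw [smul_add, smul_smul, mul_comm t]
      abel
    rw [exp] at h0
    simp only [map_add, map_smul, smul_eq_mul, hy, mul_zero, add_zero] at h0
    convert h0 using 1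
    ring
  have h1 : c + d = 0 := by
    apply aux_u e
    intro s
    have := key (s : ℂ)
    rw [Complex.conj_ofReal] at this
    convert this using 1
    ring
  have h2 : Complex.I * (d - c) = 0 := by
    apply aux_u e
    intro s
    have := key ((s : ℝ) * Complex.I)
    rw [map_mul, Complex.conj_ofReal, Complex.conj_I] at this
    convert this using 1
    ring
  have h3 : d - c = 0 := by
    rcases mul_eq_zero.mp h2 with h | h
    · exact absurd h Complex.I_ne_zero
    · exact h
  have : (2:ℂ) * c = 0 := by linear_combination h1 - h3
  simpa using this

/-- A norm-≤-1 functional with φ(1)=1 is positive. -/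
lemma pos_of_norm {A : Type*} [CStarAlgebra A] [PartialOrder A] [StarOrderedRing A]
    (φ : A →L[ℂ] ℂ) (hn : ‖φ‖ ≤ 1) (h1 : φ 1 = 1) :
    ∀ x : A, 0 ≤ x → 0 ≤ φ x := by
  have hnt : Nontrivial A := by
    by_contra h
    have : Subsingleton A := not_nontrivial_iff_subsingleton.mp h
    have h0 : (1 : A) = 0 := Subsingleton.elim _ _
    rw [h0, map_zero] at h1
    exact one_ne_zero h1.symm
  have hop : ∀ z : A, ‖φ z‖ ≤ ‖z‖ := by
    intro z
    calc ‖φ z‖ ≤ ‖φ‖ * ‖z‖ := φ.le_opNorm _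
      _ ≤ ‖z‖ := by nlinarith [norm_nonneg z]
  have him : ∀ x : A, IsSelfAdjoint x → (φ x).im = 0 := by
    intro x hx
    by_contra hi
    have key : ∀ t : ℝ, (φ x).re ^ 2 + ((φ x).im + t) ^ 2 ≤ ‖x‖ ^ 2 + t ^ 2 := by
      intro t
      set c : ℂ := (t : ℂ) * Complex.I with hcdef
      have hb : ‖φ (x + c • 1)‖ ≤ ‖x + c • 1‖ := hop _
      have hsq : ‖x + c • 1‖ ^ 2 ≤ ‖x‖ ^ 2 + t ^ 2 := by
        have hcs : ‖x + c • 1‖ ^ 2 = ‖star (x + c • 1) * (x + c • 1)‖ := by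
          rw [CStarRing.norm_star_mul_self]; ring
        have hconj : starRingEnd ℂ c = -c := by
          rw [hcdef, map_mul, Complex.conj_ofReal, Complex.conj_I]; ring
        have hprod : star (x + c • 1) * (x + c • 1) = x * x + ((t : ℂ) ^ 2) • (1 : A) := by
          have hc2 : -(c * c) = (t : ℂ) ^ 2 := by
            rw [hcdef, mul_mul_mul_comm, Complex.I_mul_I]; ring
          rw [star_add, hx.star_eq, star_smul, star_one, Complex.star_def, hconj, ← hc2]
          simp only [add_mul, mul_add, smul_mul_assoc, mul_smul_comm, mul_one, one_mul,
            smul_smul, neg_smul, neg_mul]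
          module
        rw [hcs, hprod]
        calc ‖x * x + ((t : ℂ) ^ 2) • (1 : A)‖ ≤ ‖x * x‖ + ‖((t : ℂ) ^ 2) • (1 : A)‖ :=
              norm_add_le _ _
          _ ≤ ‖x‖ ^ 2 + t ^ 2 := by
              rw [norm_smul, norm_one, mul_one]
              have h1 := norm_mul_le x x
              have h2 : ‖(t : ℂ) ^ 2‖ = t ^ 2 := by
                rw [norm_pow, Complex.norm_real, Real.norm_eq_abs, sq_abs]
              nlinarith
      have hval : φ (x + c • 1) = φ x + c := by
        rw [map_add, map_smul, h1, smul_eq_mul, mul_one]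
      rw [hval] at hb
      have hnorm2 : ‖φ x + c‖ ^ 2 = (φ x).re ^ 2 + ((φ x).im + t) ^ 2 := by
        rw [Complex.sq_norm]
        simp [Complex.normSq_apply, hcdef]
        ring
      nlinarith [norm_nonneg (φ x + c), norm_nonneg (x + c • 1)]
    have h2 := key ((‖x‖ ^ 2 - (φ x).re ^ 2 - (φ x).im ^ 2 + 1) / (2 * (φ x).im))
    set s := (‖x‖ ^ 2 - (φ x).re ^ 2 - (φ x).im ^ 2 + 1) / (2 * (φ x).im) with hs
    have hsv : 2 * s * (φ x).im = ‖x‖ ^ 2 - (φ x).re ^ 2 - (φ x).im ^ 2 + 1 := by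
      rw [mul_comm 2 s, mul_assoc, hs, div_mul_cancel₀ _ (mul_ne_zero two_ne_zero hi)]
    nlinarith
  intro x hx
  have hsa : IsSelfAdjoint x := hx.isSelfAdjoint
  have him1 := him x hsa
  have hle : x ≤ algebraMap ℝ A ‖x‖ := hsa.le_algebraMap_norm_self
  have hnn : (0:A) ≤ algebraMap ℝ A ‖x‖ - x := sub_nonneg.mpr hle
  have hub : algebraMap ℝ A ‖x‖ - x ≤ algebraMap ℝ A ‖x‖ := by
    exact sub_le_self _ hx
  have hnorm : ‖algebraMap ℝ A ‖x‖ - x‖ ≤ ‖x‖ := by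
    calc ‖algebraMap ℝ A ‖x‖ - x‖ ≤ ‖algebraMap ℝ A ‖x‖‖ :=
          CStarAlgebra.norm_le_norm_of_nonneg_of_le hnn hub
      _ = ‖x‖ := by
          rw [Algebra.algebraMap_eq_smul_one, norm_smul, norm_one, Real.norm_eq_abs,
            abs_of_nonneg (norm_nonneg x), mul_one]
  have hφv : φ (algebraMap ℝ A ‖x‖ - x) = (‖x‖ : ℂ) - φ x := by
    have halg : algebraMap ℝ A ‖x‖ = ((‖x‖ : ℂ)) • (1 : A) := by
      rw [IsScalarTower.algebraMap_apply ℝ ℂ A, Algebra.algebraMap_eq_smul_one]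
      norm_num
    rw [map_sub, halg, map_smul, h1, smul_eq_mul, mul_one]
  have hb : ‖(‖x‖ : ℂ) - φ x‖ ≤ ‖x‖ := by
    rw [← hφv]
    exact (hop _).trans hnorm
  have hre : 0 ≤ (φ x).re := by
    have h2 : ‖(‖x‖ : ℂ) - φ x‖ ^ 2 = (‖x‖ - (φ x).re) ^ 2 := by
      rw [Complex.sq_norm]
      simp [Complex.normSq_apply, him1]
      ring
    nlinarith [norm_nonneg ((‖x‖ : ℂ) - φ x)]
  rw [Complex.le_def]
  simpa using ⟨hre, him1.symm⟩

lemma exists_state {A : Type*} [CStarAlgebra A] [PartialOrder A] [StarOrderedRing A]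
    [Nontrivial A] (a : A) (hna : ¬ IsUnit a) :
    ∃ φ : A →L[ℂ] ℂ, (∀ x : A, 0 ≤ x → 0 ≤ φ x) ∧ φ 1 = 1 ∧ φ a = 0 := by
  set S : Submodule ℂ A := (Submodule.span ℂ {a}).topologicalClosure with hS
  haveI hSc : IsClosed (S : Set A) := Submodule.isClosed_topologicalClosure _
  have hdist : ∀ m ∈ (S : Set A), (1:ℝ) ≤ ‖(1:A) - m‖ := by
    have hspan : ∀ m ∈ (Submodule.span ℂ {a} : Submodule ℂ A), (1:ℝ) ≤ ‖(1:A) - m‖ := by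
      intro m hm
      obtain ⟨β, rfl⟩ := Submodule.mem_span_singleton.mp hm
      have hmem : (1:ℂ) ∈ spectrum ℂ ((1:A) - β • a) := by
        rw [spectrum.mem_iff]
        intro hu
        apply hna
        have h2 : (algebraMap ℂ A 1) - ((1:A) - β • a) = β • a := by
          simp
        rw [h2] at hu
        rcases eq_or_ne β 0 with hβ | hβ
        · rw [hβ, zero_smul] at hu
          exact absurd hu not_isUnit_zero
        · have h3 : a = β⁻¹ • (β • a) := by rw [smul_smul, inv_mul_cancel₀ hβ, one_smul]
          have halg : β⁻¹ • (β • a) = (algebraMap ℂ A β⁻¹) * (β • a) := by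
            rw [Algebra.algebraMap_eq_smul_one, smul_mul_assoc, one_mul]
          rw [h3, halg]
          exact ((algebraMap ℂ A).isUnit_map (IsUnit.mk0 _ (inv_ne_zero hβ))).mul hu
      have := spectrum.norm_le_norm_of_mem hmem
      simpa using this
    have hcl : IsClosed {m : A | (1:ℝ) ≤ ‖(1:A) - m‖} :=
      isClosed_le continuous_const ((continuous_const.sub continuous_id).norm)
    have : (S : Set A) ⊆ {m : A | (1:ℝ) ≤ ‖(1:A) - m‖} := by
      rw [hS, Submodule.topologicalClosure_coe]
      exact closure_minimal hspan hcl
    exact fun m hm => this hm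
  set mk1 : A ⧸ S := Submodule.Quotient.mk 1 with hmk1def
  have hmk1 : (1:ℝ) ≤ ‖mk1‖ := by
    by_contra h
    push_neg at h
    obtain ⟨m, hm, hlt⟩ := Submodule.Quotient.norm_mk_lt mk1 (sub_pos.mpr h)
    have hmem : (1:A) - m ∈ S := by
      rw [← Submodule.Quotient.eq]
      exact hm.symm
    have := hdist _ hmem
    simp only [sub_sub_cancel] at this
    linarith
  have hmk1ne : mk1 ≠ 0 := by
    intro h
    rw [h, norm_zero] at hmk1
    linarith
  obtain ⟨g, hg1, hgv⟩ := exists_dual_vector ℂ mk1 (norm_ne_zero_iff.mpr hmk1ne)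
  set r : ℝ := ‖mk1‖ with hr
  have hrne : (r : ℂ) ≠ 0 := by
    simp only [ne_eq, Complex.ofReal_eq_zero]
    linarith
  have hbound : ∀ x : A, ‖(r:ℂ)⁻¹ * g (Submodule.Quotient.mk x)‖ ≤ 1 * ‖x‖ := by
    intro x
    rw [norm_mul, one_mul]
    have h1 : ‖g (Submodule.Quotient.mk x)‖ ≤ ‖(Submodule.Quotient.mk x : A ⧸ S)‖ := by
      calc ‖g _‖ ≤ ‖g‖ * ‖(Submodule.Quotient.mk x : A ⧸ S)‖ := g.le_opNorm _
        _ = _ := by rw [hg1, one_mul]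
    have h2 : ‖(Submodule.Quotient.mk x : A ⧸ S)‖ ≤ ‖x‖ := Submodule.Quotient.norm_mk_le _ _
    have h3 : ‖(r:ℂ)⁻¹‖ ≤ 1 := by
      rw [norm_inv, Complex.norm_real, Real.norm_eq_abs, abs_of_nonneg (by linarith)]
      rw [inv_le_one_iff₀]
      right; exact hmk1
    calc ‖(r:ℂ)⁻¹‖ * ‖g (Submodule.Quotient.mk x)‖ ≤ 1 * ‖x‖ := by
          apply mul_le_mul h3 (h1.trans h2) (norm_nonneg _) zero_le_one
      _ = ‖x‖ := one_mul _
  set l : A →ₗ[ℂ] ℂ :=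
    { toFun := fun x => (r:ℂ)⁻¹ * g (Submodule.Quotient.mk x)
      map_add' := by intro x y; simp [Submodule.Quotient.mk_add, mul_add]
      map_smul' := by
        intro c x
        simp only [Submodule.Quotient.mk_smul, map_smul, smul_eq_mul, RingHom.id_apply]
        ring } with hl
  set φ : A →L[ℂ] ℂ := l.mkContinuous 1 hbound with hφ
  have hφn : ‖φ‖ ≤ 1 := l.mkContinuous_norm_le zero_le_one hbound
  have hφ1 : φ 1 = 1 := by
    show (r:ℂ)⁻¹ * g (Submodule.Quotient.mk 1) = 1
    rw [← hmk1def, hgv]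
    exact inv_mul_cancel₀ hrne
  have hφa : φ a = 0 := by
    show (r:ℂ)⁻¹ * g (Submodule.Quotient.mk a) = 0
    have : (Submodule.Quotient.mk a : A ⧸ S) = 0 := by
      rw [Submodule.Quotient.mk_eq_zero]
      exact Submodule.le_topologicalClosure _ (Submodule.mem_span_singleton_self a)
    rw [this, map_zero, mul_zero]
  exact ⟨φ, pos_of_norm φ hφn hφ1, hφ1, hφa⟩

/-- The seminorm `f ↦ ‖√a·f·√a‖` on the dual of `A` is a norm iff
`Re φ(a) > 0` for every nonzero positive continuous linear functional `φ` on `A`. -/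
theorem stmt7 {A : Type*} [CStarAlgebra A] [PartialOrder A] [StarOrderedRing A]
    (a : A) (ha : 0 ≤ a) :
    (∀ f : A →L[ℂ] ℂ, sandwich a f = 0 → f = 0) ↔
      (∀ φ : A →L[ℂ] ℂ, (∀ x : A, 0 ≤ x → 0 ≤ φ x) → φ ≠ 0 → 0 < (φ a).re) := by
  constructor
  · intro hL φ hpos hne
    have h0 : 0 ≤ φ a := hpos a ha
    by_contra hre
    push_neg at hre
    have hdef := Complex.le_def.mp h0
    simp only [Complex.zero_re, Complex.zero_im] at hdef
    have h1 : φ a = 0 := Complex.ext (le_antisymm hre hdef.1) hdef.2.symm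
    have hs : sandwich a φ = 0 := by
      ext x
      rw [sandwich_apply]
      have hystar : star (CFC.sqrt a) = CFC.sqrt a :=
        (CFC.sqrt_nonneg (a := a)).isSelfAdjoint.star_eq
      have hy : φ (star (CFC.sqrt a) * CFC.sqrt a) = 0 := by
        rw [hystar, CFC.sqrt_mul_sqrt_self a ha, h1]
      have hcs := cs φ hpos (CFC.sqrt a) hy (x * CFC.sqrt a)
      rw [hystar] at hcs
      simpa [mul_assoc] using hcs
    exact hne (hL φ hs)
  · intro hR f hf
    by_cases hA : Subsingleton A
    · ext x
      rw [Subsingleton.elim x (0 : A), map_zero]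
      simp
    · haveI : Nontrivial A := not_subsingleton_iff_nontrivial.mp hA
      have hu : IsUnit a := by
        by_contra hna
        obtain ⟨φ, hpos, hφ1, hφa⟩ := exists_state a hna
        have hne : φ ≠ 0 := by
          intro h
          rw [h] at hφ1
          simp at hφ1
        have := hR φ hpos hne
        rw [hφa] at this
        simp at this
      obtain ⟨u, hua⟩ := hu
      set s := CFC.sqrt a with hsdef
      have hss : s * s = a := CFC.sqrt_mul_sqrt_self a ha
      have hcomm : s * a = a * s := by
        rw [← hss, mul_assoc]
      have hau : a * (↑u⁻¹ : A) = 1 := by rw [← hua]; exact Units.mul_inv u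
      have hua2 : (↑u⁻¹ : A) * a = 1 := by rw [← hua]; exact Units.inv_mul u
      have h1 : (↑u⁻¹ : A) * s = s * ↑u⁻¹ := by
        calc (↑u⁻¹ : A) * s = ↑u⁻¹ * s * (a * ↑u⁻¹) := by rw [hau, mul_one]
          _ = ↑u⁻¹ * (s * a) * ↑u⁻¹ := by simp only [mul_assoc]
          _ = ↑u⁻¹ * (a * s) * ↑u⁻¹ := by rw [hcomm]
          _ = (↑u⁻¹ * a) * (s * ↑u⁻¹) := by simp only [mul_assoc]
          _ = s * ↑u⁻¹ := by rw [hua2, one_mul]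
      have hinv1 : s * ((↑u⁻¹ : A) * s) = 1 := by
        rw [h1, ← mul_assoc, hss, hau]
      have hinv2 : (s * (↑u⁻¹ : A)) * s = 1 := by
        rw [← h1, mul_assoc, hss, hua2]
      ext x
      have hx : s * (((↑u⁻¹ : A) * s) * x * (s * ↑u⁻¹)) * s = x := by
        calc s * (((↑u⁻¹ : A) * s) * x * (s * ↑u⁻¹)) * s
            = (s * ((↑u⁻¹ : A) * s)) * x * ((s * ↑u⁻¹) * s) := by
              simp only [mul_assoc]
          _ = x := by rw [hinv1, hinv2, one_mul, mul_one]
      have hzero := congrArg (fun g : A →L[ℂ] ℂ => g (((↑u⁻¹ : A) * s) * x * (s * ↑u⁻¹))) hf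
      simp only [ContinuousLinearMap.zero_apply] at hzero
      rw [sandwich_apply] at hzero
      rw [← hsdef] at hzero
      rw [hx] at hzero
      simpa using hzero
end

section
/- Let A be a unital C*-algebra, let a, b ∈ A with 0 ≤ a ≤ b, and let f be a hermitian continuous linear functional on A. Then ‖√a·f·√a‖ ≤ ‖√b·f·√b‖. -/
set_option synthInstance.maxHeartbeats 1000000
set_option maxHeartbeats 1000000

open scoped ComplexOrder

section aux

lemma stmt11_aux_g_nonneg (ε t : ℝ) : 0 ≤ Real.sqrt t / Real.sqrt (t + ε) :=
  div_nonneg (Real.sqrt_nonneg _) (Real.sqrt_nonneg _)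

lemma stmt11_aux_g_le_one (ε t : ℝ) (hε : 0 < ε) :
    Real.sqrt t / Real.sqrt (t + ε) ≤ 1 := by
  rcases le_or_gt t 0 with ht | ht
  · rw [Real.sqrt_eq_zero_of_nonpos ht]; simp
  · exact div_le_one_of_le₀ (Real.sqrt_le_sqrt (by linarith)) (Real.sqrt_nonneg _)

lemma stmt11_aux_one_sub_mul (ε t : ℝ) (hε : 0 < ε) (ht : 0 ≤ t) :
    (1 - Real.sqrt t / Real.sqrt (t + ε)) * t ≤ ε := by
  set u := Real.sqrt t with hu
  set v := Real.sqrt (t + ε) with hv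
  have hu0 : 0 ≤ u := Real.sqrt_nonneg _
  have hv0 : 0 < v := Real.sqrt_pos.mpr (by linarith)
  have huv : u ≤ v := Real.sqrt_le_sqrt (by linarith)
  have hu2 : u * u = t := Real.mul_self_sqrt ht
  have hv2 : v * v = t + ε := Real.mul_self_sqrt (by linarith)
  have hvu : 1 - u / v = (v - u) / v := by field_simp
  rw [hvu, div_mul_eq_mul_div, div_le_iff₀ hv0]
  have hε2 : ε = v * v - u * u := by linarith
  have h2 : 0 ≤ (v - u) * ((v + u) * v - u * u) :=
    mul_nonneg (by linarith) (by nlinarith)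
  rw [← hu2, hε2]
  nlinarith [h2]

lemma stmt11_aux_inv_mul (ε t : ℝ) (hε : 0 < ε) (ht : 0 ≤ t) :
    (Real.sqrt (t + ε))⁻¹ * t * (Real.sqrt (t + ε))⁻¹ ≤ 1 := by
  have hv0 : 0 < Real.sqrt (t + ε) := Real.sqrt_pos.mpr (by linarith)
  have hv2 : Real.sqrt (t + ε) * Real.sqrt (t + ε) = t + ε := Real.mul_self_sqrt (by linarith)
  rw [mul_comm _ t, mul_assoc, ← mul_inv, hv2, ← div_eq_mul_inv,
    div_le_one (by linarith)]
  linarith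

end aux

/-- For `0 ≤ a ≤ b` in a unital C*-algebra `A` and a hermitian
continuous linear functional `f` on `A`, `‖√a·f·√a‖ ≤ ‖√b·f·√b‖`. -/
theorem stmt11 {A : Type*} [CStarAlgebra A] [PartialOrder A] [StarOrderedRing A]
    (a b : A) (ha : 0 ≤ a) (hab : a ≤ b) (f : A →L[ℂ] ℂ)
    (hf : ∀ x : A, f (star x) = starRingEnd ℂ (f x)) :
    ‖sandwich a f‖ ≤ ‖sandwich b f‖ := by
  clear hf
  have hb : 0 ≤ b := ha.trans hab
  set sa := CFC.sqrt a with hsa_def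
  set sb := CFC.sqrt b with hsb_def
  have hsa0 : 0 ≤ sa := CFC.sqrt_nonneg _
  have hsa : IsSelfAdjoint sa := .of_nonneg hsa0
  have hsb : IsSelfAdjoint sb := .of_nonneg (CFC.sqrt_nonneg _)
  have hsbcfc : sb = cfc Real.sqrt b := by
    rw [hsb_def, CFC.sqrt_eq_real_sqrt b hb, cfcₙ_eq_cfc]
  have hspec : ∀ t ∈ spectrum ℝ b, 0 ≤ t := fun t ht => spectrum_nonneg_of_nonneg hb ht
  -- the key estimate
  have key : ∀ ε : ℝ, 0 < ε →
      ‖sandwich a f‖ ≤ ‖sandwich b f‖ + 2 * ‖f‖ * ‖sa‖ * Real.sqrt ε := by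
    intro ε hε
    -- continuity facts
    have hden : ∀ t ∈ spectrum ℝ b, Real.sqrt (t + ε) ≠ 0 := fun t ht =>
      ne_of_gt (Real.sqrt_pos.mpr (by have := hspec t ht; linarith))
    have hcsqrt : ContinuousOn Real.sqrt (spectrum ℝ b) := Real.continuous_sqrt.continuousOn
    have hcden : ContinuousOn (fun t : ℝ => Real.sqrt (t + ε)) (spectrum ℝ b) :=
      (Real.continuous_sqrt.comp (continuous_id.add continuous_const)).continuousOn
    have hck : ContinuousOn (fun t : ℝ => (Real.sqrt (t + ε))⁻¹) (spectrum ℝ b) :=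
      hcden.inv₀ hden
    set g : ℝ → ℝ := fun t => Real.sqrt t / Real.sqrt (t + ε) with hg_def
    have hcg : ContinuousOn g (spectrum ℝ b) := hcsqrt.div hcden hden
    have hcg1 : ContinuousOn (fun t => 1 - g t) (spectrum ℝ b) := continuousOn_const.sub hcg
    have hcg2 : ContinuousOn (fun t => Real.sqrt (1 - g t)) (spectrum ℝ b) :=
      Real.continuous_sqrt.comp_continuousOn hcg1
    -- the elements
    set k : A := cfc (fun t : ℝ => (Real.sqrt (t + ε))⁻¹) b with hk_def
    set c : A := cfc g b with hc_def
    set h : A := cfc (fun t => 1 - g t) b with hh_def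
    set h2 : A := cfc (fun t => Real.sqrt (1 - g t)) b with hh2_def
    have hk_sa : IsSelfAdjoint k := cfc_predicate _ b
    have hc_sa : IsSelfAdjoint c := cfc_predicate _ b
    have hh_sa : IsSelfAdjoint h := cfc_predicate _ b
    have hh2_sa : IsSelfAdjoint h2 := cfc_predicate _ b
    set e : A := k * sa with he_def
    set d : A := c * sa with hd_def
    -- √b * k = c
    have hbk : sb * k = c := by
      rw [hsbcfc, hk_def, hc_def, ← cfc_mul _ _ b hcsqrt hck]
      exact cfc_congr fun t ht => (div_eq_mul_inv _ _)  |>.symm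
    have hsbe : sb * e = d := by rw [he_def, ← mul_assoc, hbk, hd_def]
    -- ‖e‖ ≤ 1
    have he_mul : e * star e = k * a * k := by
      rw [he_def, star_mul, hsa.star_eq, hk_sa.star_eq]
      calc k * sa * (sa * k) = k * (sa * sa) * k := by noncomm_ring
      _ = k * a * k := by rw [hsa_def, CFC.sqrt_mul_sqrt_self a ha]
    have hkak_le : k * a * k ≤ k * b * k := by
      simpa [hk_sa.star_eq] using star_left_conjugate_le_conjugate hab k
    have hkbk : k * b * k = cfc (fun t => (Real.sqrt (t + ε))⁻¹ * t * (Real.sqrt (t + ε))⁻¹) b := by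
      conv_lhs => rw [← cfc_id ℝ b hb.isSelfAdjoint]
      rw [hk_def, ← cfc_mul _ _ b hck continuousOn_id, ← cfc_mul (fun x => (Real.sqrt (x + ε))⁻¹ * id x) _ b (hck.mul continuousOn_id) hck]
      exact cfc_congr fun t _ => rfl
    have hkbk_le : k * b * k ≤ 1 := by
      rw [hkbk]
      exact cfc_le_one _ _ fun t ht => stmt11_aux_inv_mul ε t hε (hspec t ht)
    have hkak_nonneg : 0 ≤ k * a * k := by
      simpa [hk_sa.star_eq] using star_left_conjugate_nonneg ha k
    have he_norm : ‖e‖ ≤ 1 := by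
      have h1 : ‖e * star e‖ ≤ 1 := by
        rw [he_mul]
        exact (CStarAlgebra.norm_le_one_iff_of_nonneg _ hkak_nonneg).mpr
          (hkak_le.trans hkbk_le)
      rw [CStarRing.norm_self_mul_star] at h1
      nlinarith [norm_nonneg e]
    -- ‖sa - d‖ ≤ √ε
    have hone_sub : (1 : A) - c = h := by
      rw [hh_def, cfc_sub _ _ b continuousOn_const hcg, cfc_const_one ℝ b, hc_def]
    have hhh : h * h = cfc (fun t => (1 - g t) * (1 - g t)) b := by
      rw [hh_def, cfc_mul _ _ b hcg1 hcg1]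
    have hh2h2 : h2 * h2 = h := by
      rw [hh2_def, ← cfc_mul _ _ b hcg2 hcg2, hh_def]
      exact cfc_congr fun t ht => Real.mul_self_sqrt
        (by have := stmt11_aux_g_le_one ε t hε; linarith)
    have hsad : sa - d = h * sa := by
      rw [hd_def, ← hone_sub]; noncomm_ring
    have hh2bh2_norm : ‖h2 * b * h2‖ ≤ ε := by
      have : h2 * b * h2 = cfc (fun t => Real.sqrt (1 - g t) * t * Real.sqrt (1 - g t)) b := by
        conv_lhs => rw [← cfc_id ℝ b hb.isSelfAdjoint]
        rw [hh2_def, ← cfc_mul _ _ b hcg2 continuousOn_id,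
          ← cfc_mul (fun x => Real.sqrt (1 - g x) * id x) _ b (hcg2.mul continuousOn_id) hcg2]
        exact cfc_congr fun t _ => rfl
      rw [this]
      refine norm_cfc_le hε.le fun t ht => ?_
      have h1 : 0 ≤ 1 - g t := by have := stmt11_aux_g_le_one ε t hε; linarith
      have h2' : Real.sqrt (1 - g t) * t * Real.sqrt (1 - g t) = (1 - g t) * t := by
        rw [mul_comm _ t, mul_assoc, Real.mul_self_sqrt h1]; ring
      rw [Real.norm_eq_abs, h2', abs_of_nonneg (mul_nonneg h1 (hspec t ht))]
      exact stmt11_aux_one_sub_mul ε t hε (hspec t ht)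
    have hh2ah2_le : ‖h2 * a * h2‖ ≤ ε := by
      refine le_trans (CStarAlgebra.norm_le_norm_of_nonneg_of_le ?_ ?_) hh2bh2_norm
      · simpa [hh2_sa.star_eq] using star_left_conjugate_nonneg ha h2
      · simpa [hh2_sa.star_eq] using star_left_conjugate_le_conjugate hab h2
    have hsahsa : ‖sa * h * sa‖ ≤ ε := by
      have heq : sa * h * sa = star (h2 * sa) * (h2 * sa) := by
        rw [star_mul, hh2_sa.star_eq, hsa.star_eq, ← hh2h2]; noncomm_ring
      have heq2 : (h2 * sa) * star (h2 * sa) = h2 * a * h2 := by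
        rw [star_mul, hh2_sa.star_eq, hsa.star_eq]
        calc h2 * sa * (sa * h2) = h2 * (sa * sa) * h2 := by noncomm_ring
        _ = h2 * a * h2 := by rw [hsa_def, CFC.sqrt_mul_sqrt_self a ha]
      rw [heq, CStarRing.norm_star_mul_self, ← CStarRing.norm_self_mul_star, heq2]
      exact hh2ah2_le
    have hdiff : ‖sa - d‖ ≤ Real.sqrt ε := by
      refine Real.le_sqrt_of_sq_le ?_
      have h1 : ‖sa - d‖ ^ 2 = ‖star (h * sa) * (h * sa)‖ := by
        rw [CStarRing.norm_star_mul_self, hsad, sq]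
      have h2' : star (h * sa) * (h * sa) = sa * (h * h) * sa := by
        rw [star_mul, hh_sa.star_eq, hsa.star_eq]; noncomm_ring
      have h3 : sa * (h * h) * sa ≤ sa * h * sa := by
        have hmono : h * h ≤ h := by
          rw [hhh, hh_def]
          refine cfc_mono (fun t ht => ?_) (hcg1.mul hcg1) hcg1
          have hg0 := stmt11_aux_g_le_one ε t hε
          nlinarith [stmt11_aux_g_nonneg ε t]
        simpa [hsa.star_eq] using star_left_conjugate_le_conjugate hmono sa
      have h4 : 0 ≤ sa * (h * h) * sa := by
        rw [← h2']; exact star_mul_self_nonneg _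
      calc ‖sa - d‖ ^ 2 = ‖sa * (h * h) * sa‖ := by rw [h1, h2']
      _ ≤ ‖sa * h * sa‖ := CStarAlgebra.norm_le_norm_of_nonneg_of_le h4 h3
      _ ≤ ε := hsahsa
    have hdiff' : ‖sa - star d‖ ≤ Real.sqrt ε := by
      have : sa - star d = star (sa - d) := by rw [star_sub, hsa.star_eq]
      rw [this, norm_star]; exact hdiff
    have hd_norm : ‖d‖ ≤ ‖sa‖ := by
      have hc_norm : ‖c‖ ≤ 1 := by
        refine norm_cfc_le zero_le_one fun t ht => ?_
        rw [Real.norm_eq_abs, abs_of_nonneg (stmt11_aux_g_nonneg ε t)]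
        exact stmt11_aux_g_le_one ε t hε
      calc ‖d‖ ≤ ‖c‖ * ‖sa‖ := norm_mul_le _ _
      _ ≤ 1 * ‖sa‖ := by gcongr
      _ = ‖sa‖ := one_mul _
    -- final estimate
    refine ContinuousLinearMap.opNorm_le_bound _ (by positivity) fun x => ?_
    rw [sandwich_apply]
    have hdx : sb * (e * x * star e) * sb = d * x * star d := by
      have : star d = star e * sb := by rw [← hsbe, star_mul, hsb.star_eq]
      rw [this, ← hsbe]; noncomm_ring
    have hsplit : sa * x * sa = d * x * star d + ((sa - d) * x * sa + d * x * (sa - star d)) := by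
      noncomm_ring
    calc ‖f (sa * x * sa)‖
        = ‖f (d * x * star d) + (f ((sa - d) * x * sa) + f (d * x * (sa - star d)))‖ := by
          rw [← map_add, ← map_add, ← hsplit]
      _ ≤ ‖f (d * x * star d)‖ + (‖f ((sa - d) * x * sa)‖ + ‖f (d * x * (sa - star d))‖) := by
          refine (norm_add_le _ _).trans ?_; gcongr; exact norm_add_le _ _
      _ ≤ ‖sandwich b f‖ * ‖x‖ + (‖f‖ * (Real.sqrt ε * ‖x‖ * ‖sa‖)
            + ‖f‖ * (‖sa‖ * ‖x‖ * Real.sqrt ε)) := by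
          gcongr
          · have : f (d * x * star d) = sandwich b f (e * x * star e) := by
              rw [sandwich_apply, hdx]
            rw [this]
            calc ‖sandwich b f (e * x * star e)‖ ≤ ‖sandwich b f‖ * ‖e * x * star e‖ :=
                  (sandwich b f).le_opNorm _
            _ ≤ ‖sandwich b f‖ * (1 * ‖x‖ * 1) := by
                gcongr
                refine (norm_mul_le _ _).trans ?_
                gcongr
                · exact (norm_mul_le _ _).trans (by gcongr)
                · rw [norm_star]; exact he_norm
            _ = ‖sandwich b f‖ * ‖x‖ := by ring
          · calc ‖f ((sa - d) * x * sa)‖ ≤ ‖f‖ * ‖(sa - d) * x * sa‖ := f.le_opNorm _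
            _ ≤ ‖f‖ * (Real.sqrt ε * ‖x‖ * ‖sa‖) := by
                gcongr
                refine (norm_mul_le _ _).trans ?_
                gcongr
                exact (norm_mul_le _ _).trans (by gcongr)
          · calc ‖f (d * x * (sa - star d))‖ ≤ ‖f‖ * ‖d * x * (sa - star d)‖ := f.le_opNorm _
            _ ≤ ‖f‖ * (‖sa‖ * ‖x‖ * Real.sqrt ε) := by
                gcongr
                refine (norm_mul_le _ _).trans ?_
                gcongr
                exact (norm_mul_le _ _).trans (by gcongr)
      _ ≤ (‖sandwich b f‖ + 2 * ‖f‖ * ‖sa‖ * Real.sqrt ε) * ‖x‖ := by ring_nf; rfl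
  -- conclude from the key estimate
  refine le_of_forall_pos_le_add fun δ hδ => ?_
  set C : ℝ := 2 * ‖f‖ * ‖sa‖ with hC_def
  have hC0 : 0 ≤ C := by positivity
  have hεpos : (0 : ℝ) < (δ / (C + 1)) ^ 2 := by positivity
  have hkey := key _ hεpos
  rw [Real.sqrt_sq (by positivity)] at hkey
  refine hkey.trans ?_
  have h1 : C * (δ / (C + 1)) ≤ (C + 1) * (δ / (C + 1)) := by gcongr; linarith
  have h2 : (C + 1) * (δ / (C + 1)) = δ := by field_simp
  linarith
end
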